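/- For natural numbers n, k ≥ 0, the elementary symmetric polynomial e_k evaluated at the variables 1, q, q^2, ..., q^{n-1} equals q^{binomial(k,2)} · qbinom(n, k), i.e., e_k(1, q, ..., q^{n-1}) = q^{k(k-1)/2} · qbinom(n, k). -/

import Mathlib

open Finset

/-- The `q`-analogue `[n]_q = 1 + q + ⋯ + q^(n-1)` as a rational function in `q`. -/
noncomputable def qInt (n : ℕ) : RatFunc ℚ := ∑ i ∈ Finset.range n, RatFunc.X ^ i

/-- The `q`-factorial `[n]_q! = [n]_q [n-1]_q ⋯ [1]_q`. -/
noncomputable def qFact : ℕ → RatFunc ℚ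
  | 0 => 1
  | n + 1 => qInt (n + 1) * qFact n

/-- The Gaussian binomial coefficient `[n]_q! / ([k]_q! [n-k]_q!)`. -/
noncomputable def qBinom (n k : ℕ) : RatFunc ℚ :=
  if k ≤ n then qFact n / (qFact k * qFact (n - k)) else 0

/-- The elementary symmetric polynomial `e_k` evaluated at the `n` quantities
`1, q, q², …, q^(n-1)`: the sum over all `k`-element subsets of `{0, …, n-1}`
of `q` raised to the sum of the chosen exponents. -/
noncomputable def eEvalPowers (n k : ℕ) : Polynomial ℚ :=
  ∑ s ∈ (Finset.range n).powersetCard k, Polynomial.X ^ (∑ a ∈ s, a)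

lemma qInt_eq (n : ℕ) :
    qInt n = algebraMap (Polynomial ℚ) (RatFunc ℚ) (∑ i ∈ Finset.range n, Polynomial.X ^ i) := by
  simp [qInt, map_sum, map_pow, RatFunc.algebraMap_X]

lemma qInt_ne_zero {n : ℕ} (h : 0 < n) : qInt n ≠ 0 := by
  rw [qInt_eq, ne_eq, FaithfulSMul.algebraMap_eq_zero_iff]
  intro hc
  have h2 := congrArg (Polynomial.eval 1) hc
  simp at h2
  omega

lemma qFact_ne_zero (n : ℕ) : qFact n ≠ 0 := by
  induction n with
  | zero => simp [qFact]
  | succ m ih =>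
    simp only [qFact]
    exact mul_ne_zero (qInt_ne_zero (Nat.succ_pos m)) ih

lemma qInt_add (a b : ℕ) : qInt (a + b) = qInt a + RatFunc.X ^ a * qInt b := by
  simp only [qInt, Finset.sum_range_add, Finset.mul_sum, pow_add]

lemma qBinom_rec (n j : ℕ) (h : j ≤ n) :
    qBinom (n + 1) (j + 1) = qBinom n (j + 1) + RatFunc.X ^ (n - j) * qBinom n j := by
  obtain ⟨d, rfl⟩ := Nat.exists_eq_add_of_le h
  cases d with
  | zero =>
    simp only [qBinom, Nat.add_zero, le_refl, if_pos, Nat.sub_self, Nat.add_sub_cancel_left,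
      if_neg (by omega : ¬ j + 1 ≤ j)]
    simp only [qFact, mul_one, zero_add, pow_zero, one_mul]
    rw [div_self (mul_ne_zero (qInt_ne_zero (Nat.succ_pos j)) (qFact_ne_zero j)),
      div_self (qFact_ne_zero j)]
  | succ e =>
    have h1 : j + 1 ≤ j + (e + 1) + 1 := by omega
    have h2 : j + 1 ≤ j + (e + 1) := by omega
    have h3 : j ≤ j + (e + 1) := by omega
    rw [qBinom, qBinom, qBinom, if_pos h1, if_pos h2, if_pos h3]
    have e1 : j + (e + 1) + 1 - (j + 1) = e + 1 := by omega
    have e2 : j + (e + 1) - (j + 1) = e := by omega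
    have e3 : j + (e + 1) - j = e + 1 := by omega
    rw [e1, e2, e3]
    have hf1 : qFact (j + e + 1 + 1) = qInt (j + e + 2) * qFact (j + e + 1) := rfl
    have hsplit : qInt (j + e + 2) = qInt (e + 1) + RatFunc.X ^ (e + 1) * qInt (j + 1) := by
      have := qInt_add (e + 1) (j + 1)
      rwa [show e + 1 + (j + 1) = j + e + 2 by omega] at this
    have hf2 : qFact (e + 1) = qInt (e + 1) * qFact e := rfl
    have hf3 : qFact (j + 1) = qInt (j + 1) * qFact j := rfl
    have hz1 := qFact_ne_zero (j + 1)
    have hz2 := qFact_ne_zero (e + 1)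
    have hz3 := qFact_ne_zero e
    have hz4 := qFact_ne_zero j
    have hz5 := qFact_ne_zero (j + e + 1)
    have hje : j + (e + 1) = j + e + 1 := by omega
    rw [hje, hf1, hsplit]
    field_simp
    rw [hf2, hf3]
    ring

lemma eEval_succ (n j : ℕ) :
    eEvalPowers (n + 1) (j + 1) = eEvalPowers n (j + 1) + Polynomial.X ^ n * eEvalPowers n j := by
  have hn : n ∉ Finset.range n := by simp
  unfold eEvalPowers
  rw [Finset.range_add_one, Finset.powersetCard_succ_insert hn, Finset.sum_union, Finset.sum_image]
  · rw [Finset.mul_sum]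
    congr 1
    refine Finset.sum_congr rfl fun s hs => ?_
    have hns : n ∉ s := fun hc => hn ((Finset.mem_powersetCard.mp hs).1 hc)
    rw [Finset.sum_insert hns, pow_add]
  · intro s hs t ht hst
    have hns : n ∉ s := fun hc => hn ((Finset.mem_powersetCard.mp hs).1 hc)
    have hnt : n ∉ t := fun hc => hn ((Finset.mem_powersetCard.mp ht).1 hc)
    have := congrArg (Finset.erase · n) hst
    simpa [Finset.erase_insert hns, Finset.erase_insert hnt] using this
  · rw [Finset.disjoint_left]
    intro s hs hs'
    have hns : n ∉ s := fun hc => hn ((Finset.mem_powersetCard.mp hs).1 hc)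
    obtain ⟨t, ht, rfl⟩ := Finset.mem_image.mp hs'
    exact hns (Finset.mem_insert_self n t)

theorem esymm_eval_qpowers (n k : ℕ) :
    algebraMap (Polynomial ℚ) (RatFunc ℚ) (eEvalPowers n k)
      = RatFunc.X ^ (k.choose 2) * qBinom n k := by
  induction n generalizing k with
  | zero =>
    cases k with
    | zero => simp [eEvalPowers, qBinom, qFact]
    | succ j =>
      rw [show eEvalPowers 0 (j + 1) = 0 by
        unfold eEvalPowers
        rw [Finset.powersetCard_eq_empty.mpr (by simp), Finset.sum_empty]]
      simp [qBinom]
  | succ m ih =>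
    cases k with
    | zero =>
      have : eEvalPowers (m + 1) 0 = 1 := by simp [eEvalPowers]
      rw [this, map_one, qBinom, if_pos (Nat.zero_le _), Nat.sub_zero]
      show (1 : RatFunc ℚ) = RatFunc.X ^ 0 * (qFact (m+1) / (1 * qFact (m+1)))
      rw [pow_zero, one_mul, one_mul, div_self (qFact_ne_zero (m+1))]
    | succ j =>
      by_cases hjm : j ≤ m
      · rw [eEval_succ, map_add, map_mul, map_pow, RatFunc.algebraMap_X, ih, ih,
          qBinom_rec m j hjm, mul_add]
        congr 1
        rw [← mul_assoc, ← mul_assoc, ← pow_add, ← pow_add]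
        congr 2
        have := Nat.choose_succ_succ (j + 1) 1
        have h1 : (j + 1).choose 2 = j + j.choose 2 := by
          rw [Nat.choose_succ_succ]
          simp [Nat.choose_one_right, Nat.add_comm]
        omega
      · have hz1 : qBinom (m + 1) (j + 1) = 0 := by rw [qBinom, if_neg (by omega)]
        rw [hz1, mul_zero]
        rw [show eEvalPowers (m + 1) (j + 1) = 0 by
          simp [eEvalPowers, Finset.powersetCard_eq_empty.mpr (by simpa using by omega : (Finset.range (m+1)).card < j + 1)]]
        simp
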